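/- Let 1 < q < n be coprime, n/q = [α_1,…,α_N] with i-series i_0=n, i_1=q, i_{t+1}=α_t i_t − i_{t−1}, and n/(n−q) = [a_2,…,a_{e−1}]. Define the r-series by r_2 = a_2(n−q) − q, r_3 = r_2 − (n−q), r_4 = (a_3+1)r_3 − r_2, and r_j = a_{j−1}r_{j−1} − r_{j−2} for 5 ≤ j ≤ e, and set l_j = 2 + Σ_{p=1}^j (α_p − 2). Let ν be the number of leading 2's in [α_1,…,α_N] (i.e. α_1=⋯=α_ν=2, α_{ν+1} ≥ 3, or ν = N when all α_p = 2). Then r_{l_t} = i_t − i_{t+1} for all ν+1 ≤ t ≤ N. -/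

import Mathlib

/-- The Jung–Hirzebruch negative continued fraction. -/
def ncf : List ℤ → ℚ
  | [] => 0
  | a :: l => (a : ℚ) - (ncf l)⁻¹

lemma ncf_gt_one : ∀ L : List ℤ, (∀ x ∈ L, 2 ≤ x) → L ≠ [] → 1 < ncf L := by
  intro L
  induction L with
  | nil => intro _ h; exact absurd rfl h
  | cons c M ih =>
    intro hmem _
    have hc : (2:ℤ) ≤ c := hmem c (by simp)
    have hc' : (2:ℚ) ≤ (c:ℚ) := by exact_mod_cast hc
    match M with
    | [] => simp [ncf]; linarith
    | d :: M' =>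
      have hM : 1 < ncf (d :: M') := ih (fun x hx => hmem x (by simp [hx])) (by simp)
      have h0 : 0 < ncf (d :: M') := by linarith
      have h1 : (ncf (d :: M'))⁻¹ < 1 := by
        rw [inv_eq_one_div, div_lt_one h0]; exact hM
      have h2 : 0 < (ncf (d :: M'))⁻¹ := inv_pos.2 h0
      show 1 < (c:ℚ) - (ncf (d :: M'))⁻¹
      linarith

lemma ncf_step (c : ℤ) (L : List ℤ) (hL : ∀ v ∈ L, 2 ≤ v) (hL0 : L ≠ [])
    (x y : ℤ) (hy : 0 < y) (hcop : IsCoprime x y)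
    (h : ncf (c :: L) = (x:ℚ)/(y:ℚ)) :
    0 < c*y - x ∧ c*y - x < y ∧ IsCoprime y (c*y - x) ∧
      ncf L = (y:ℚ)/((c*y - x : ℤ):ℚ) := by
  have hu : 1 < ncf L := ncf_gt_one L hL hL0
  have hu0 : 0 < ncf L := by linarith
  have hyQ : (0:ℚ) < (y:ℚ) := by exact_mod_cast hy
  have hyne : (y:ℚ) ≠ 0 := ne_of_gt hyQ
  have hune : ncf L ≠ 0 := ne_of_gt hu0
  have h' : (ncf L)⁻¹ = ((c*y - x : ℤ):ℚ)/(y:ℚ) := by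
    have hh : (c:ℚ) - (ncf L)⁻¹ = (x:ℚ)/(y:ℚ) := h
    push_cast
    field_simp at hh ⊢
    linarith
  have hinv0 : 0 < (ncf L)⁻¹ := inv_pos.2 hu0
  have hinv1 : (ncf L)⁻¹ < 1 := by rw [inv_eq_one_div, div_lt_one hu0]; exact hu
  have hq0 : 0 < ((c*y - x : ℤ):ℚ)/(y:ℚ) := h' ▸ hinv0
  have hq1 : ((c*y - x : ℤ):ℚ)/(y:ℚ) < 1 := h' ▸ hinv1
  have hz0Q : 0 < ((c*y - x : ℤ):ℚ) := by
    rcases div_pos_iff.mp hq0 with ⟨h1, _⟩ | ⟨_, h2⟩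
    · exact h1
    · linarith
  have hz0 : 0 < c*y - x := by exact_mod_cast hz0Q
  have hz1 : c*y - x < y := by
    have := (div_lt_one hyQ).mp hq1
    exact_mod_cast this
  refine ⟨hz0, hz1, ?_, ?_⟩
  · have h2 := (hcop.symm.neg_right).add_mul_left_right c
    rwa [show -x + y*c = c*y - x by ring] at h2
  · have : ncf L = ((ncf L)⁻¹)⁻¹ := (inv_inv _).symm
    rw [this, h', inv_div]

lemma ofFn_cast (f : ℕ → ℤ) {m m' : ℕ} (h : m = m') :
    List.ofFn (fun k : Fin m => f k) = List.ofFn (fun k : Fin m' => f k) := by subst h; rfl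

lemma ofFn_succ' (f : ℕ → ℤ) (m : ℕ) :
    List.ofFn (fun k : Fin (m+1) => f k) = f 0 :: List.ofFn (fun k : Fin m => f ((k:ℕ)+1)) := by
  rw [List.ofFn_succ]
  congr 1

def ds (x y : ℤ) (a : ℕ → ℤ) : ℕ → ℤ
  | 0 => x
  | 1 => x - y
  | (m+2) => a (m+2) * ds x y a (m+1) - ds x y a m

lemma ds_zero (x y : ℤ) (a : ℕ → ℤ) : ds x y a 0 = x := by simp [ds]
lemma ds_one (x y : ℤ) (a : ℕ → ℤ) : ds x y a 1 = x - y := by simp [ds]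
lemma ds_two_add (x y : ℤ) (a : ℕ → ℤ) (m : ℕ) :
    ds x y a (m+2) = a (m+2) * ds x y a (m+1) - ds x y a m := by simp [ds]

lemma engine (x y : ℤ) (hy : 0 < y) (hyx : y < x) (hcop : IsCoprime x y)
    (M : ℕ) (hM : 1 ≤ M) (β : ℕ → ℤ) (hβ : ∀ t, 1 ≤ t → t ≤ M → 2 ≤ β t)
    (j : ℕ → ℤ) (hj0 : j 0 = x) (hj1 : j 1 = y)
    (hjrec : ∀ t, 1 ≤ t → t ≤ M → j (t + 1) = β t * j t - j (t - 1))
    (hncf : ncf (List.ofFn (fun k : Fin M => β ((k:ℕ) + 1))) = (x:ℚ)/(y:ℚ)) :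
    (∀ t, t ≤ M → 0 < j t) ∧ (∀ t, t < M → j (t+1) < j t) ∧ j M = 1 ∧ j (M+1) = 0 := by
  have hmem : ∀ t, ∀ v ∈ List.ofFn (fun k : Fin (M - t) => β ((k:ℕ)+1+t)), 2 ≤ v := by
    intro t v hv
    rw [List.mem_ofFn] at hv
    obtain ⟨k, hk⟩ := hv
    have hk2 : (k:ℕ) < M - t := k.isLt
    exact hk ▸ hβ _ (by omega) (by omega)
  have AUX : ∀ t, t + 1 ≤ M →
      0 < j (t+1) ∧ j (t+1) < j t ∧ IsCoprime (j t) (j (t+1)) ∧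
        ncf (List.ofFn (fun k : Fin (M - t) => β ((k:ℕ)+1+t))) = (j t : ℚ)/(j (t+1) : ℚ) := by
    intro t
    induction t with
    | zero =>
      intro _
      show 0 < j 1 ∧ j 1 < j 0 ∧ IsCoprime (j 0) (j 1) ∧
          ncf (List.ofFn (fun k : Fin M => β ((k:ℕ)+1))) = (j 0 : ℚ) / (j 1 : ℚ)
      rw [hj0, hj1]
      exact ⟨hy, hyx, hcop, hncf⟩
    | succ s ih =>
      intro hs1
      obtain ⟨h1, h2, h3, h4⟩ := ih (by omega)
      have h5 : M - s = (M - (s+1)) + 1 := by omega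
      have hcast : List.ofFn (fun k : Fin (M - s) => β ((k:ℕ) + 1 + s)) =
          List.ofFn (fun k : Fin ((M - (s+1)) + 1) => β ((k:ℕ) + 1 + s)) :=
        ofFn_cast (fun k => β (k + 1 + s)) h5
      have hsucc : List.ofFn (fun k : Fin ((M - (s+1)) + 1) => β ((k:ℕ) + 1 + s)) =
          β (0 + 1 + s) :: List.ofFn (fun k : Fin (M - (s+1)) => β ((k:ℕ) + 1 + 1 + s)) :=
        ofFn_succ' (fun k => β (k + 1 + s)) (M - (s+1))
      have htail : List.ofFn (fun k : Fin (M - (s+1)) => β ((k:ℕ) + 1 + 1 + s)) =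
          List.ofFn (fun k : Fin (M - (s+1)) => β ((k:ℕ) + 1 + (s+1))) :=
        congrArg List.ofFn (funext fun k => congrArg β (by omega))
      have hhead : β (0 + 1 + s) = β (s + 1) := congrArg β (by omega)
      have hd : List.ofFn (fun k : Fin (M - s) => β ((k:ℕ) + 1 + s)) =
          β (s+1) :: List.ofFn (fun k : Fin (M - (s+1)) => β ((k:ℕ) + 1 + (s+1))) := by
        rw [hcast, hsucc, htail, hhead]
      rw [hd] at h4
      have hL0 : List.ofFn (fun k : Fin (M - (s+1)) => β ((k:ℕ) + 1 + (s+1))) ≠ [] := by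
        apply List.ne_nil_of_length_pos
        rw [List.length_ofFn]
        omega
      obtain ⟨hz0, hz1, hzcop, hzncf⟩ :=
        ncf_step (β (s+1)) _ (hmem (s+1)) hL0 (j s) (j (s+1)) h1 h3 h4
      have hrec : j (s+1+1) = β (s+1) * j (s+1) - j s := by
        have h := hjrec (s+1) (by omega) (by omega)
        simpa using h
      refine ⟨?_, ?_, ?_, ?_⟩
      · rw [hrec]; exact hz0
      · rw [hrec]; exact hz1
      · rw [hrec]; exact hzcop
      · rw [hrec]; exact hzncf
  have hM1 : M - 1 + 1 = M := by omega
  obtain ⟨p1, p2, p3, p4⟩ := AUX (M-1) (by omega)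
  rw [hM1] at p1 p2 p3 p4
  have hone : M - (M-1) = 1 := by omega
  have hcast : List.ofFn (fun k : Fin (M - (M-1)) => β ((k:ℕ)+1+(M-1))) =
      List.ofFn (fun k : Fin 1 => β ((k:ℕ)+1+(M-1))) := ofFn_cast (fun k => β (k+1+(M-1))) hone
  have hlist : List.ofFn (fun k : Fin 1 => β ((k:ℕ)+1+(M-1))) =
      β (0+1+(M-1)) :: List.ofFn (fun k : Fin 0 => β ((k:ℕ)+1+1+(M-1))) :=
    ofFn_succ' (fun k => β (k+1+(M-1))) 0
  have hnil : List.ofFn (fun k : Fin 0 => β ((k:ℕ)+1+1+(M-1))) = [] := List.ofFn_zero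
  have hhead : β (0+1+(M-1)) = β M := congrArg β (by omega)
  rw [hcast, hlist, hnil, hhead] at p4
  have hncf1 : ncf [β M] = (β M : ℚ) := by simp [ncf]
  rw [hncf1] at p4
  have hJMne : ((j M : ℤ):ℚ) ≠ 0 := by
    have : (0:ℚ) < ((j M : ℤ):ℚ) := by exact_mod_cast p1
    exact ne_of_gt this
  have hmul : β M * j M = j (M-1) := by
    field_simp at p4
    exact_mod_cast p4
  have hdvd : j M ∣ j (M-1) := ⟨β M, by rw [← hmul]; ring⟩
  have hunit : IsUnit (j M) := IsCoprime.isUnit_of_dvd' p3 hdvd dvd_rfl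
  have hjM1 : j M = 1 := by
    rcases Int.isUnit_iff.mp hunit with h | h
    · exact h
    · exfalso; rw [h] at p1; omega
  have hnext : j (M+1) = 0 := by
    have hr := hjrec M hM le_rfl
    rw [hr, ← hmul]
    ring
  refine ⟨?_, ?_, hjM1, hnext⟩
  · intro t ht
    rcases t with _ | t'
    · rw [hj0]; linarith
    · exact (AUX t' (by omega)).1
  · intro t ht
    exact (AUX t (by omega)).2.1

theorem stmt10 (n q : ℤ) (hq : 1 < q) (hn : q < n) (hcop : IsCoprime n q)
    (N : ℕ) (hN : 1 ≤ N) (α : ℕ → ℤ) (hαb : ∀ t, 1 ≤ t → t ≤ N → 2 ≤ α t)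
    (hncf : ncf (List.ofFn (fun j : Fin N => α (j + 1))) = (n : ℚ) / (q : ℚ))
    (e : ℕ) (he : 3 ≤ e) (a : ℕ → ℤ) (hab : ∀ j, 2 ≤ j → j ≤ e - 1 → 2 ≤ a j)
    (hancf : ncf (List.ofFn (fun j : Fin (e - 2) => a (j + 2))) =
      (n : ℚ) / ((n : ℚ) - (q : ℚ)))
    (i : ℕ → ℤ) (hi0 : i 0 = n) (hi1 : i 1 = q)
    (hirec : ∀ t, 1 ≤ t → t ≤ N → i (t + 1) = α t * i t - i (t - 1))
    (r : ℕ → ℤ) (hr2 : r 2 = a 2 * (n - q) - q) (hr3 : r 3 = r 2 - (n - q))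
    (hr4 : r 4 = (a 3 + 1) * r 3 - r 2)
    (hrrec : ∀ j, 5 ≤ j → j ≤ e → r j = a (j - 1) * r (j - 1) - r (j - 2))
    (l : ℕ → ℕ) (hl : ∀ j, (l j : ℤ) = 2 + ∑ p ∈ Finset.Icc 1 j, (α p - 2))
    (ν : ℕ) (hνN : ν ≤ N) (hν2 : ∀ t, 1 ≤ t → t ≤ ν → α t = 2)
    (hν3 : ν = N ∨ 3 ≤ α (ν + 1)) :
    ∀ t, ν + 1 ≤ t → t ≤ N → r (l t) = i t - i (t + 1) := by
  intro t htlow hthigh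
  rcases Nat.lt_or_ge ν N with hνlt | hνge
  swap
  · omega
  have hν3' : 3 ≤ α (ν + 1) := by
    rcases hν3 with h | h
    · omega
    · exact h
  -- Part A: facts about the i-sequence
  obtain ⟨iPOS, iDEC, iN1, iN0⟩ :=
    engine n q (by linarith) hn hcop N hN α hαb i hi0 hi1 hirec hncf
  -- Part B: facts about the dual sequence ds n q a
  have hcop2 : IsCoprime n (n - q) := by
    rw [show n - q = -(q + n * (-1)) by ring]
    exact (hcop.add_mul_left_right (-1)).neg_right
  have hancf' : ncf (List.ofFn (fun k : Fin (e-2) => a ((k:ℕ)+1+1))) =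
      (n:ℚ)/(((n-q : ℤ)):ℚ) := by
    push_cast
    exact hancf
  obtain ⟨dPOS, dDEC, dN1, dN0⟩ :=
    engine n (n - q) (by linarith) (by linarith) hcop2 (e - 2) (by omega)
      (fun t => a (t + 1))
      (fun t h1 h2 => hab (t + 1) (by omega) (by omega))
      (ds n q a) (ds_zero n q a) (ds_one n q a)
      (by
        intro t h1 h2
        obtain ⟨m, rfl⟩ : ∃ m, t = m + 1 := ⟨t - 1, by omega⟩
        exact ds_two_add n q a m)
      hancf'
  -- basic facts about l
  have hl2 : ∀ u, u ≤ N → 2 ≤ l u := by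
    intro u hu
    have h := hl u
    have hsum : 0 ≤ ∑ p ∈ Finset.Icc 1 u, (α p - 2) := by
      apply Finset.sum_nonneg
      intro p hp
      have hp' := Finset.mem_Icc.mp hp
      have := hαb p hp'.1 (le_trans hp'.2 hu)
      omega
    have h2 : (2:ℤ) ≤ (l u : ℤ) := by rw [h]; linarith
    exact_mod_cast h2
  have hlstep : ∀ u, (l (u+1) : ℤ) = (l u : ℤ) + (α (u+1) - 2) := by
    intro u
    rw [hl (u+1), hl u, Finset.sum_Icc_succ_top (by omega : 1 ≤ u+1)]
    ring
  have hlν : l ν = 2 := by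
    have h := hl ν
    have hsum : ∑ p ∈ Finset.Icc 1 ν, (α p - 2) = 0 := by
      apply Finset.sum_eq_zero
      intro p hp
      have hp' := Finset.mem_Icc.mp hp
      rw [hν2 p hp'.1 hp'.2]
      ring
    have h2 : (l ν : ℤ) = 2 := by rw [h, hsum]; ring
    exact_mod_cast h2
  -- linear prefix
  have LIN : ∀ u, u ≤ ν + 1 → i u = n - (u:ℤ) * (n - q) := by
    intro u
    induction u using Nat.strong_induction_on with
    | _ u ih =>
      rcases u with _ | u'
      · intro _; rw [hi0]; push_cast; ring
      · rcases u' with _ | v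
        · intro _; rw [hi1]; push_cast; ring
        · intro hu
          have hα : α (v+1) = 2 := hν2 (v+1) (by omega) (by omega)
          have hr : i (v+2) = 2 * i (v+1) - i v := by
            have h := hirec (v+1) (by omega) (by omega)
            rw [hα] at h
            exact h
          rw [hr, ih (v+1) (by omega) (by omega), ih v (by omega) (by omega)]
          push_cast
          ring
  -- the main invariant
  have FULL : ∀ u, ν ≤ u → u ≤ N →
      (l u - 1 ≤ e - 2 ∧
       ds n q a (l u - 1) = i u - i (u+1) ∧
       ∃ k : ℕ, ds n q a (l u - 2) =
         (i u - i (u+1)) + i (u+1) + (k:ℤ) * (i u - i (u+1))) := by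
    intro u hu1
    induction u, hu1 using Nat.le_induction with
    | base =>
      intro _
      refine ⟨by omega, ?_, ⟨ν, ?_⟩⟩
      · have h1 : l ν - 1 = 1 := by omega
        rw [h1, ds_one n q a, LIN ν (by omega), LIN (ν+1) le_rfl]
        push_cast
        ring
      · have h0 : l ν - 2 = 0 := by omega
        rw [h0, ds_zero n q a, LIN ν (by omega), LIN (ν+1) le_rfl]
        push_cast
        ring
    | succ u hu ih =>
      intro huN
      obtain ⟨hguard, hval1, k0, hval2⟩ := ih (by omega)
      have hlu2 : 2 ≤ l u := hl2 u (by omega)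
      have hii_pos : 0 < i (u+1) := iPOS (u+1) (by omega)
      have hdd_pos : 0 < i (u+1) - i (u+2) := by
        rcases Nat.lt_or_ge (u+1) N with h | h
        · have := iDEC (u+1) h
          linarith
        · have huN' : u + 1 = N := by omega
          have hz : i (u+2) = 0 := by
            have : u + 2 = N + 1 := by omega
            rw [this]; exact iN0
          have ho : i (u+1) = 1 := by rw [huN']; exact iN1
          rw [hz, ho]; norm_num
      have hαu : 2 ≤ α (u+1) := hαb (u+1) (by omega) (by omega)
      have hrecu : i (u+2) = α (u+1) * i (u+1) - i u := by
        have h := hirec (u+1) (by omega) (by omega)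
        exact h
      have hd_pos : 0 < i u - i (u+1) := by
        have := iDEC u (by omega)
        linarith
      -- inner induction through block u
      have INNER : ∀ s : ℕ, (s:ℤ) ≤ α (u+1) - 2 →
          (l u - 1 + s ≤ e - 2 ∧
           ds n q a (l u - 1 + s) = (i u - i (u+1)) - (s:ℤ) * i (u+1) ∧
           ∃ k : ℕ, (k = 0 ∨ s = 0) ∧
             ds n q a (l u - 2 + s) =
               (i u - i (u+1)) - (s:ℤ) * i (u+1) + i (u+1) + (k:ℤ) * (i u - i (u+1))) := by
        intro s
        induction s with
        | zero =>
          intro _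
          refine ⟨by simpa using hguard, by simpa using hval1, ⟨k0, Or.inr rfl, ?_⟩⟩
          simpa using hval2
        | succ s ihs =>
          intro hs1
          have hs1' : (s:ℤ) + 1 ≤ α (u+1) - 2 := by push_cast at hs1; linarith
          have hs0 : (s:ℤ) ≤ α (u+1) - 2 := by linarith
          obtain ⟨g1, g2, k, hk, g3⟩ := ihs hs0
          clear ihs
          obtain ⟨p, hp⟩ : ∃ p, p = l u - 2 + s := ⟨_, rfl⟩
          have hcur : l u - 1 + s = p + 1 := by clear * - hp hlu2; omega
          have hnext : l u - 1 + (s+1) = p + 2 := by clear * - hp hlu2; omega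
          have hprev2 : l u - 2 + (s+1) = p + 1 := by clear * - hp hlu2; omega
          rw [hcur] at g2
          have g3' : ds n q a p = (i u - i (u+1)) - (s:ℤ) * i (u+1) + i (u+1)
              + (k:ℤ) * (i u - i (u+1)) := by rw [hp]; exact g3
          have g1' : p + 1 ≤ e - 2 := by clear * - hp hlu2 g1; omega
          -- lower bound for the next D-value
          have hb : (0:ℤ) ≤ (α (u+1) - 2 - ((s:ℤ)+1)) * i (u+1) :=
            mul_nonneg (by linarith) hii_pos.le
          have hr' : (i u - i (u+1)) - (α (u+1) - 2) * i (u+1) = i (u+1) - i (u+2) := by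
            rw [hrecu]; ring
          have hDnext_pos : 0 < (i u - i (u+1)) - ((s:ℤ)+1) * i (u+1) := by
            clear * - hb hr' hdd_pos
            linarith
          have hDnext_lt : (i u - i (u+1)) - ((s:ℤ)+1) * i (u+1) < ds n q a (p+1) := by
            rw [g2]; clear * - hii_pos; linarith
          -- position bound
          have hii1 : (1:ℤ) ≤ i (u+1) := by clear * - hii_pos; omega
          have hpos_next : p + 2 ≤ e - 2 := by
            by_contra hcon
            have hme : p + 1 = e - 2 := by clear * - hcon g1'; omega
            have h1' : ds n q a (p+1) = 1 := by rw [hme]; exact dN1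
            rw [g2] at h1'
            clear * - h1' hDnext_pos hii1
            linarith
          have hds_rec : ds n q a (p+2) = a (p+2) * ds n q a (p+1) - ds n q a p :=
            ds_two_add n q a p
          have hds_next_pos : 0 < ds n q a (p+2) :=
            dPOS (p+2) (by clear * - hpos_next; omega)
          have hds_next_lt : ds n q a (p+2) < ds n q a (p+1) :=
            dDEC (p+1) (by clear * - hpos_next; omega)
          have hdm_pos : 0 < ds n q a (p+1) :=
            dPOS (p+1) (by clear * - hpos_next; omega)
          have hkey : ∃ c : ℤ, ds n q a (p+2)
              - ((i u - i (u+1)) - ((s:ℤ)+1) * i (u+1)) = c * ds n q a (p+1) := by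
            rcases hk with hk0 | hs00
            · subst hk0
              exact ⟨a (p+2) - 2, by rw [hds_rec, g3', g2]; push_cast; ring⟩
            · subst hs00
              exact ⟨a (p+2) - 2 - (k:ℤ), by rw [hds_rec, g3', g2]; push_cast; ring⟩
          obtain ⟨c, hc⟩ := hkey
          have hc0 : c = 0 := by
            rcases lt_trichotomy c 0 with h | h | h
            · exfalso
              have h1 : c ≤ -1 := by clear * - h; omega
              have h2 : c * ds n q a (p+1) ≤ -1 * ds n q a (p+1) :=
                mul_le_mul_of_nonneg_right h1 hdm_pos.le
              clear * - h2 hc hds_next_pos hDnext_lt hdm_pos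
              linarith
            · exact h
            · exfalso
              have h1 : 1 ≤ c := by clear * - h; omega
              have h2 : 1 * ds n q a (p+1) ≤ c * ds n q a (p+1) :=
                mul_le_mul_of_nonneg_right h1 hdm_pos.le
              clear * - h2 hc hds_next_lt hDnext_pos hdm_pos
              linarith
          have hstep_val : ds n q a (p+2) = (i u - i (u+1)) - ((s:ℤ)+1) * i (u+1) := by
            rw [hc0] at hc
            linarith
          refine ⟨by omega, ?_, ⟨0, Or.inl rfl, ?_⟩⟩
          · rw [hnext, hstep_val]
            push_cast
            ring
          · rw [hprev2, g2]
            push_cast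
            ring
      -- conclude FULL (u+1)
      have hSnn : (0:ℤ) ≤ α (u+1) - 2 := by linarith
      have hSnat : (((α (u+1) - 2).toNat : ℤ)) = α (u+1) - 2 := Int.toNat_of_nonneg hSnn
      obtain ⟨G1, G2, k, hkk, G3⟩ := INNER (α (u+1) - 2).toNat (le_of_eq hSnat)
      have hlsucc : l (u+1) = l u + (α (u+1) - 2).toNat := by
        have h1 := hlstep u
        clear * - h1 hSnat
        omega
      have hpos1 : l (u+1) - 1 = l u - 1 + (α (u+1) - 2).toNat := by
        clear * - hlsucc hlu2; omega
      have hpos2 : l (u+1) - 2 = l u - 2 + (α (u+1) - 2).toNat := by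
        clear * - hlsucc hlu2; omega
      refine ⟨by clear * - G1 hpos1; omega, ?_, ?_⟩
      · rw [hpos1, G2, hSnat, hrecu]
        ring
      · by_cases hS0 : (α (u+1) - 2).toNat = 0
        · have hα2 : α (u+1) = 2 := by clear * - hS0 hSnat; omega
          refine ⟨k + 1, ?_⟩
          have hG3 : ds n q a (l u - 2) = (i u - i (u+1)) + i (u+1)
              + (k:ℤ) * (i u - i (u+1)) := by
            have h := G3
            rw [hS0] at h
            simpa using h
          rw [hpos2, hS0, Nat.add_zero, hG3, hrecu, hα2]
          push_cast
          ring
        · have hk0 : k = 0 := by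
            rcases hkk with h | h
            · exact h
            · exact absurd h hS0
          subst hk0
          refine ⟨1, ?_⟩
          rw [hpos2, G3, hSnat, hrecu]
          push_cast
          ring
  -- lower bound for l t
  have hl3 : 3 ≤ l t := by
    have h := hl t
    have hterm : (α (ν+1) - 2) ≤ ∑ p ∈ Finset.Icc 1 t, (α p - 2) := by
      apply Finset.single_le_sum (f := fun p => α p - 2)
      · intro p hp
        have hp' := Finset.mem_Icc.mp hp
        have := hαb p hp'.1 (le_trans hp'.2 hthigh)
        omega
      · exact Finset.mem_Icc.mpr ⟨by omega, htlow⟩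
    have h3 : (3:ℤ) ≤ (l t : ℤ) := by rw [h]; linarith
    exact_mod_cast h3
  obtain ⟨hg, hval, -⟩ := FULL t (by omega) hthigh
  have hlt2 : 2 ≤ l t := hl2 t hthigh
  have hlte : l t ≤ e - 1 := by omega
  -- bridge between r and ds
  have BRIDGE : ∀ w, 3 ≤ w → w ≤ e - 1 → r w = ds n q a (w - 1) := by
    intro w
    induction w using Nat.strong_induction_on with
    | _ w ih =>
      intro hw3 hwe
      by_cases h3 : w = 3
      · subst h3
        show r 3 = ds n q a 2
        have d2 : ds n q a 2 = a 2 * ds n q a 1 - ds n q a 0 := ds_two_add n q a 0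
        rw [hr3, hr2, d2, ds_one n q a, ds_zero n q a]
        ring
      · by_cases h4 : w = 4
        · subst h4
          show r 4 = ds n q a 3
          have hh : r 3 = ds n q a 2 := ih 3 (by omega) (by omega) (by omega)
          have d3 : ds n q a 3 = a 3 * ds n q a 2 - ds n q a 1 := ds_two_add n q a 1
          have d2 : ds n q a 2 = a 2 * ds n q a 1 - ds n q a 0 := ds_two_add n q a 0
          rw [hr4, hh, d3, d2, ds_one n q a, ds_zero n q a, hr2]
          ring
        · obtain ⟨w', rfl⟩ : ∃ w', w = w' + 3 := ⟨w - 3, by omega⟩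
          have hw2 : 2 ≤ w' := by omega
          have hrw : r (w'+3) = a (w'+2) * r (w'+2) - r (w'+1) :=
            hrrec (w'+3) (by omega) (by omega)
          have h1 : r (w'+2) = ds n q a (w'+1) := ih (w'+2) (by omega) (by omega) (by omega)
          have h2 : r (w'+1) = ds n q a w' := ih (w'+1) (by omega) (by omega) (by omega)
          show r (w'+3) = ds n q a (w'+2)
          rw [hrw, h1, h2, ds_two_add n q a w']
  rw [BRIDGE (l t) hl3 hlte]
  exact hval
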